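/- Under conditions (i) and (ii) of exposure unconfoundedness, the conditional probability of the exposure admits the decomposition P(E = e | Y, C) = Σ_{a,g} 1[h(a,g) = e] · P(G = g | A = a, C) · P(A = a | C), where the sum ranges over all values a of A and g of G. -/
import Mathlib


open Classical

/-- Probability of an event under a weight function on a finite sample space. -/
noncomputable def Pr {Ω : Type*} [Fintype Ω] (w : Ω → ℝ) (p : Ω → Prop) : ℝ :=
  ∑ ω, if p ω then w ω else 0

/-- Conditional probability P(p | q). -/
noncomputable def CPr {Ω : Type*} [Fintype Ω] (w : Ω → ℝ) (p q : Ω → Prop) : ℝ :=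
  Pr w (fun ω => p ω ∧ q ω) / Pr w q

lemma Pr_congr' {Ω : Type*} [Fintype Ω] (w : Ω → ℝ) {p q : Ω → Prop}
    (h : ∀ ω, p ω ↔ q ω) : Pr w p = Pr w q := by
  unfold Pr; exact Finset.sum_congr rfl fun ω _ => by rw [h ω]

lemma Pr_mono' {Ω : Type*} [Fintype Ω] {w : Ω → ℝ} (hw : ∀ ω, 0 ≤ w ω)
    {p q : Ω → Prop} (h : ∀ ω, p ω → q ω) : Pr w p ≤ Pr w q := by
  unfold Pr
  apply Finset.sum_le_sum
  intro ω _
  by_cases hp : p ω <;> by_cases hq : q ω <;> simp_all [hw ω]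

lemma Pr_false' {Ω : Type*} [Fintype Ω] (w : Ω → ℝ) {p : Ω → Prop}
    (h : ∀ ω, ¬ p ω) : Pr w p = 0 := by
  unfold Pr; simp [h]

/-- Chain rule for conditional probability. -/
lemma CPr_chain' {Ω : Type*} [Fintype Ω] (w : Ω → ℝ) (p q r : Ω → Prop)
    (hq : Pr w (fun ω => q ω ∧ r ω) ≠ 0) :
    CPr w (fun ω => p ω ∧ q ω) r
      = CPr w p (fun ω => q ω ∧ r ω) * CPr w q r := by
  unfold CPr
  have h1 : Pr w (fun ω => (p ω ∧ q ω) ∧ r ω) = Pr w (fun ω => p ω ∧ q ω ∧ r ω) :=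
    Pr_congr' w (by tauto)
  rw [h1, div_mul_div_comm, mul_comm (Pr w fun ω => p ω ∧ q ω ∧ r ω),
    mul_div_mul_left _ _ hq]

/-- Law of total probability over the fibers of (A, G). -/
lemma Pr_fiber' {Ω α γ : Type*} [Fintype Ω] [Fintype α] [Fintype γ]
    (w : Ω → ℝ) (A : Ω → α) (G : Ω → γ) (p : Ω → Prop) :
    Pr w p = ∑ a : α, ∑ g : γ, Pr w (fun ω => p ω ∧ A ω = a ∧ G ω = g) := by
  simp only [Pr]
  have key : ∀ ω : Ω,
      (∑ a : α, ∑ g : γ, if p ω ∧ A ω = a ∧ G ω = g then w ω else 0)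
        = if p ω then w ω else 0 := by
    intro ω
    by_cases hp : p ω
    · simp only [hp, true_and]
      rw [Finset.sum_eq_single (A ω)]
      · rw [Finset.sum_eq_single (G ω)]
        · simp
        · intro b _ hb; simp [Ne.symm hb]
        · simp
      · intro b _ hb
        apply Finset.sum_eq_zero
        intro g _
        simp [Ne.symm hb]
      · simp
    · simp [hp]
  rw [Finset.sum_congr rfl fun ω _ => (key ω).symm]
  rw [Finset.sum_comm]
  exact Finset.sum_congr rfl fun a _ => Finset.sum_comm.trans
    (Finset.sum_congr rfl fun g _ => Finset.sum_congr rfl fun ω _ =>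
      by congr)

/-- Decomposition of the conditional probability of the exposure under
treatment and network unconfoundedness:
P(E = e | Y = y, C = c) = Σ_{a,g} 1[h(a,g)=e] · P(G = g | A = a, C = c) · P(A = a | C = c). -/
theorem exposure_conditional_decomposition
    {Ω α γ β κ η : Type*} [Fintype Ω] [Fintype α] [Fintype γ]
    (w : Ω → ℝ) (hw : ∀ ω, 0 ≤ w ω) (hsum : ∑ ω, w ω = 1)
    (A : Ω → α) (G : Ω → γ) (Y : Ω → β) (C : Ω → κ) (h : α → γ → η)
    (hpos : ∀ (a : α) (g : γ) (y : β) (c : κ),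
      0 < Pr w (fun ω => A ω = a ∧ G ω = g ∧ Y ω = y ∧ C ω = c))
    (hA : ∀ (a : α) (y : β) (c : κ),
      CPr w (fun ω => A ω = a) (fun ω => Y ω = y ∧ C ω = c)
        = CPr w (fun ω => A ω = a) (fun ω => C ω = c))
    (hG : ∀ (g : γ) (a : α) (y : β) (c : κ),
      CPr w (fun ω => G ω = g) (fun ω => A ω = a ∧ Y ω = y ∧ C ω = c)
        = CPr w (fun ω => G ω = g) (fun ω => A ω = a ∧ C ω = c))
    (e : η) (y : β) (c : κ) :
    CPr w (fun ω => h (A ω) (G ω) = e) (fun ω => Y ω = y ∧ C ω = c)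
      = ∑ a : α, ∑ g : γ, (if h a g = e then (1 : ℝ) else 0)
          * CPr w (fun ω => G ω = g) (fun ω => A ω = a ∧ C ω = c)
          * CPr w (fun ω => A ω = a) (fun ω => C ω = c) := by
  have hΩ : Nonempty Ω := by
    by_contra hne
    rw [not_nonempty_iff] at hne
    simp [Finset.univ_eq_empty] at hsum
  obtain ⟨ω₀⟩ := hΩ
  have hQ : ∀ (a : α), 0 < Pr w (fun ω => A ω = a ∧ Y ω = y ∧ C ω = c) := fun a =>
    lt_of_lt_of_le (hpos a (G ω₀) y c) (Pr_mono' hw (by tauto))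
  have key : CPr w (fun ω => h (A ω) (G ω) = e) (fun ω => Y ω = y ∧ C ω = c)
      = ∑ a : α, ∑ g : γ, (if h a g = e then (1 : ℝ) else 0)
          * CPr w (fun ω => G ω = g ∧ A ω = a) (fun ω => Y ω = y ∧ C ω = c) := by
    unfold CPr
    rw [Pr_fiber' w A G, Finset.sum_div]
    apply Finset.sum_congr rfl
    intro a _
    rw [Finset.sum_div]
    apply Finset.sum_congr rfl
    intro g _
    by_cases he : h a g = e
    · rw [if_pos he, one_mul]
      congr 1
      apply Pr_congr'
      intro ω
      show (h (A ω) (G ω) = e ∧ Y ω = y ∧ C ω = c) ∧ A ω = a ∧ G ω = g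
        ↔ (G ω = g ∧ A ω = a) ∧ Y ω = y ∧ C ω = c
      constructor
      · rintro ⟨⟨_, hyc⟩, ha, hg⟩; exact ⟨⟨hg, ha⟩, hyc⟩
      · rintro ⟨⟨hg, ha⟩, hyc⟩
        subst ha; subst hg
        exact ⟨⟨he, hyc⟩, rfl, rfl⟩
    · rw [if_neg he, zero_mul, div_eq_zero_iff]
      left
      apply Pr_false'
      rintro ω ⟨⟨heq, _⟩, ha, hg⟩
      subst ha; subst hg
      exact he heq
  rw [key]
  apply Finset.sum_congr rfl
  intro a _
  apply Finset.sum_congr rfl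
  intro g _
  rw [mul_assoc]
  congr 1
  have step := CPr_chain' w (fun ω => G ω = g) (fun ω => A ω = a)
    (fun ω => Y ω = y ∧ C ω = c) (hQ a).ne'
  exact step.trans (congrArg₂ (· * ·) (hG g a y c) (hA a y c))
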